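/- Let d ≥ 2 and let e be any directed edge of the Kautz digraph K(d,D). Then for every integer k with 1 ≤ k ≤ D, U_k(e) ≥ (k/D)·d^{−(D−k)}·U_D(e). -/

import Mathlib

open scoped BigOperators Classical

namespace Kautz

/-- A vertex of the Kautz digraph `K(d,D)`: a word of length `D` over the
alphabet `{0,1,…,d}` in which adjacent letters are distinct. -/
structure Vertex (d D : ℕ) where
  word : List (Fin (d+1))
  length_eq : word.length = D
  chain : word.Chain' (· ≠ ·)

/-- Adjacency in `K(d,D)`: there is an edge `u → v` iff some word `w` of length
`D+1` with adjacent letters distinct has `u` as its prefix of length `D` and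
`v` as its suffix of length `D`. -/
def Adj {d D : ℕ} (u v : Vertex d D) : Prop :=
  ∃ w : List (Fin (d+1)), w.length = D + 1 ∧ w.Chain' (· ≠ ·) ∧
    u.word = w.dropLast ∧ v.word = w.tail

/-- A directed edge of `K(d,D)`. -/
structure Edge (d D : ℕ) where
  src : Vertex d D
  tgt : Vertex d D
  adj : Adj src tgt

/-- The edge-word `w(e) = a₀a₁⋯a_D` of an edge `e : u → v`, namely `u`
followed by the last letter of `v`. -/
def Edge.word {d D : ℕ} (e : Edge d D) : List (Fin (d+1)) :=
  e.src.word ++ e.tgt.word.drop (D - 1)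

/-- `p` is a walk from `x` to `y`, recorded as the list of successive vertices. -/
def IsWalk {d D : ℕ} (p : List (Vertex d D)) (x y : Vertex d D) : Prop :=
  p.head? = some x ∧ p.getLast? = some y ∧ p.Chain' Adj

/-- Directed graph distance in `K(d,D)`. -/
noncomputable def dist {d D : ℕ} (x y : Vertex d D) : ℕ :=
  sInf {k | ∃ p : List (Vertex d D), IsWalk p x y ∧ p.length = k + 1}

/-- `N(e;k,t)`: the number of ordered pairs `(x,y)` with `dist x y = k` such
that some geodesic (walk of length `k = dist x y`) from `x` to `y` uses `e` as
its `t`-th edge. -/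
noncomputable def N {d D : ℕ} (e : Edge d D) (k t : ℕ) : ℕ :=
  Set.ncard {xy : Vertex d D × Vertex d D |
    dist xy.1 xy.2 = k ∧
    ∃ p : List (Vertex d D), IsWalk p xy.1 xy.2 ∧ p.length = k + 1 ∧
      p[t-1]? = some e.src ∧ p[t]? = some e.tgt}

/-- `U_k(e) = ∑_{t=1}^{k} N(e;k,t)`. -/
noncomputable def U {d D : ℕ} (e : Edge d D) (k : ℕ) : ℕ :=
  ∑ t ∈ Finset.Icc 1 k, N e k t

/-- `cong(e) = ∑_{k=1}^{D} U_k(e)`. -/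
noncomputable def cong {d D : ℕ} (e : Edge d D) : ℕ :=
  ∑ k ∈ Finset.Icc 1 D, U e k

/-- `τ(d,D) = (D−1)·d^{D−2} + D·d^{D−1}`. -/
def tau (d D : ℕ) : ℕ := (D - 1) * d ^ (D - 2) + D * d ^ (D - 1)

/-- A word has a border: some proper nonempty prefix equals the suffix of the
same length. -/
def HasBorder {α : Type*} (w : List α) : Prop :=
  ∃ ℓ, 1 ≤ ℓ ∧ ℓ ≤ w.length - 1 ∧ w.take ℓ = w.drop (w.length - ℓ)

/-- An unbordered word. -/
def Unbordered {α : Type*} (w : List α) : Prop := ¬ HasBorder w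

/-- A square-free word: no nonempty factor of the form `XX`. -/
def SquareFree {α : Type*} (w : List α) : Prop :=
  ¬ ∃ X : List α, X ≠ [] ∧ (X ++ X) <:+: w

/-- A `7/4⁺`-power-free word: no factor `x^k y` with `x` nonempty, `k ≥ 1`,
`y` a prefix of `x`, and `(k·|x| + |y|)/|x| > 7/4`. -/
def SevenFourthsPlusFree {α : Type*} (w : List α) : Prop :=
  ¬ ∃ (x y : List α) (k : ℕ), x ≠ [] ∧ 1 ≤ k ∧ y <+: x ∧
    ((List.replicate k x).flatten ++ y) <:+: w ∧
    7 * x.length < 4 * (k * x.length + y.length)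

/-- A word over `{0,1,…,d}` is ternary if it uses only the letters `{0,1,2}`. -/
def IsTernary {n : ℕ} (w : List (Fin n)) : Prop := ∀ a ∈ w, (a : ℕ) < 3

/-- The suffix of `w` of length `t`. -/
def suffixWord {α : Type*} (w : List α) (t : ℕ) : List α := w.drop (w.length - t)

/-- `R_t(w)`: the set of admissible overlap lengths `r` at position `t`, i.e.
those `r` with `t+1 ≤ r ≤ |w|−t−1` such that `w = A·B·V·B` where `B` is the
suffix of `w` of length `t`, `V` is nonempty, and `|B·V| = r`. -/
noncomputable def Rt {α : Type*} (w : List α) (t : ℕ) : Finset ℕ :=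
  (Finset.Icc (t + 1) (w.length - t - 1)).filter fun r =>
    ∃ A V : List α, V ≠ [] ∧
      w = A ++ suffixWord w t ++ V ++ suffixWord w t ∧ t + V.length = r

/-- The deficit `Δ_t(e) = d^{D−1} − N(e;D,t)`. -/
noncomputable def deficit {d D : ℕ} (e : Edge d D) (t : ℕ) : ℝ :=
  (d : ℝ) ^ (D - 1) - (N e D t : ℝ)

/-- The total deficit `Δ(e) = ∑_{t=1}^{D} Δ_t(e)`. -/
noncomputable def totalDeficit {d D : ℕ} (e : Edge d D) : ℝ :=
  ∑ t ∈ Finset.Icc 1 D, deficit e t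

/-- The weighted overlap count
`Ω_d(e) = ∑_{j=1}^{⌈(D+1)/2⌉} ∑_{r ∈ R_j(w(e))} d^{−(r−j)}`. -/
noncomputable def Omega {d D : ℕ} (e : Edge d D) : ℝ :=
  ∑ j ∈ Finset.Icc 1 ((D + 2) / 2), ∑ r ∈ Rt e.word j, (d : ℝ) ^ ((j : ℤ) - (r : ℤ))

/-- The overlap `ov(u,v)`: the largest `j ≤ D` such that the last `j` letters
of `u` equal the first `j` letters of `v`. -/
noncomputable def ov {d D : ℕ} (u v : Vertex d D) : ℕ :=
  sSup {j | j ≤ D ∧ u.word.drop (D - j) = v.word.take j}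

end Kautz

namespace Kautz

variable {d D : ℕ}

lemma Vertex.ext' {u v : Vertex d D} (h : u.word = v.word) : u = v := by
  cases u; cases v; simpa using h

instance : Finite (Vertex d D) := by
  have key : ∀ v : Vertex d D, ∀ i : Fin D, (i : ℕ) < v.word.length := fun v i => by
    rw [v.length_eq]; exact i.2
  apply Finite.of_injective (fun v : Vertex d D => (fun i : Fin D => v.word[(i : ℕ)]'(key v i)))
  intro u v h
  apply Vertex.ext'
  apply List.ext_getElem (by rw [u.length_eq, v.length_eq])
  intro i h1 h2
  exact congrFun h ⟨i, by rw [← u.length_eq]; exact h1⟩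

lemma IsWalk.ne_nil {p : List (Vertex d D)} {x y : Vertex d D} (h : IsWalk p x y) : p ≠ [] := by
  intro hp; rw [hp] at h; simp [IsWalk] at h

lemma IsWalk.length_pos {p : List (Vertex d D)} {x y : Vertex d D} (h : IsWalk p x y) :
    0 < p.length := by
  cases p with
  | nil => exact absurd rfl h.ne_nil
  | cons a l => simp

lemma IsWalk.append {p q : List (Vertex d D)} {x z y : Vertex d D}
    (hp : IsWalk p x z) (hq : IsWalk q z y) :
    IsWalk (p ++ q.tail) x y ∧ (p ++ q.tail).length + 1 = p.length + q.length := by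
  obtain ⟨hp1, hp2, hp3⟩ := hp
  obtain ⟨hq1, hq2, hq3⟩ := hq
  obtain ⟨a, q', rfl⟩ : ∃ a q', q = a :: q' := by
    cases q with
    | nil => simp at hq1
    | cons a q' => exact ⟨a, q', rfl⟩
  have ha : a = z := by simpa using hq1
  subst ha
  have hpne : p ≠ [] := by intro h; rw [h] at hp1; simp at hp1
  constructor
  · refine ⟨?_, ?_, ?_⟩
    · cases p with
      | nil => simp at hp1
      | cons b p' => simpa using hp1
    · cases q' with
      | nil =>
        have : a = y := by simpa using hq2
        subst this
        simpa using hp2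
      | cons b q'' =>
        simp only [List.tail_cons]
        have h2 : (b :: q'').getLast? = some y := by
          rw [List.getLast?_cons_cons] at hq2; exact hq2
        rw [List.getLast?_append, h2]
        rfl
    · refine List.isChain_append.mpr ?_
      refine ⟨hp3, List.IsChain.tail hq3, ?_⟩
      intro x' hx' y' hy'
      have hx'z : a = x' := by rw [hp2] at hx'; simpa using hx'
      subst hx'z
      exact (List.isChain_cons.mp hq3).1 y' hy'
  · simp; omega

lemma dist_le_of_walk {x y : Vertex d D} {p : List (Vertex d D)} {m : ℕ}
    (h : IsWalk p x y) (hl : p.length = m + 1) : dist x y ≤ m :=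
  Nat.sInf_le ⟨p, h, hl⟩

lemma segment_walk {p : List (Vertex d D)} (hc : p.Chain' Adj) {i j : ℕ} (hij : i ≤ j)
    (hj : j + 1 ≤ p.length) {u v : Vertex d D} (hu : p[i]? = some u) (hv : p[j]? = some v) :
    IsWalk ((p.drop i).take (j - i + 1)) u v ∧ ((p.drop i).take (j - i + 1)).length = (j - i) + 1 := by
  have hlen : ((p.drop i).take (j - i + 1)).length = j - i + 1 := by
    simp [List.length_take, List.length_drop]; omega
  refine ⟨⟨?_, ?_, (hc.drop i).take _⟩, hlen⟩
  · rw [List.head?_eq_getElem?, List.getElem?_take, if_pos (by omega), List.getElem?_drop]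
    simpa using hu
  · rw [List.getLast?_eq_getElem?, hlen]
    rw [List.getElem?_take, if_pos (by omega), List.getElem?_drop]
    have hidx : i + (j - i + 1 - 1) = j := by omega
    rw [hidx]
    exact hv

lemma ncard_biUnion_le {α β : Type*} {s : Set α} (hs : s.Finite) (t : α → Set β)
    (ht : ∀ a, (t a).Finite) : (⋃ a ∈ s, t a).ncard ≤ ∑ a ∈ hs.toFinset, (t a).ncard := by
  classical
  have hset : (⋃ a ∈ s, t a) = ↑(hs.toFinset.biUnion fun a => (ht a).toFinset) := by
    ext x; simp [Set.Finite.mem_toFinset]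
  rw [hset, Set.ncard_coe_finset]
  refine le_trans Finset.card_biUnion_le ?_
  exact Finset.sum_le_sum fun a _ => le_of_eq (Set.ncard_eq_toFinset_card _ _).symm

lemma chain_count_right {V : Type*} [Finite V] (r : V → V → Prop) (dd : ℕ)
    (hcard : ∀ v : V, {z | r v z}.ncard ≤ dd) :
    ∀ (n : ℕ) (v : V), {l : List V | l.length = n ∧ (v :: l).Chain' r}.ncard ≤ dd ^ n := by
  intro n
  induction n with
  | zero =>
    intro v
    have hs : {l : List V | l.length = 0 ∧ (v :: l).Chain' r} = {[]} := by
      ext l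
      simp [List.length_eq_zero_iff]
      intro h; subst h; exact List.isChain_singleton _
    rw [hs]; simp
  | succ n ih =>
    intro v
    have hfin : ∀ z : V, {l : List V | l.length = n ∧ (z :: l).Chain' r}.Finite :=
      fun z => (List.finite_length_eq V n).subset fun l hl => hl.1
    have hsub : {l : List V | l.length = n + 1 ∧ (v :: l).Chain' r} ⊆
        ⋃ z ∈ {z | r v z}, (fun l => z :: l) '' {l | l.length = n ∧ (z :: l).Chain' r} := by
      rintro l ⟨hlen, hchain⟩
      obtain ⟨a, l', rfl⟩ : ∃ a l', l = a :: l' := by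
        cases l with
        | nil => simp at hlen
        | cons a l' => exact ⟨a, l', rfl⟩
      replace hchain := List.isChain_cons_cons.mp hchain
      exact Set.mem_biUnion hchain.1 ⟨l', ⟨by simpa using hlen, hchain.2⟩, rfl⟩
    refine le_trans (Set.ncard_le_ncard hsub
      (Set.Finite.biUnion (Set.toFinite _) fun z _ => ((hfin z).image _))) ?_
    refine le_trans (ncard_biUnion_le (Set.toFinite _) _ fun z => (hfin z).image _) ?_
    calc ∑ z ∈ (Set.toFinite {z | r v z}).toFinset,
          ((fun l => z :: l) '' {l | l.length = n ∧ (z :: l).Chain' r}).ncard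
        ≤ ∑ _z ∈ (Set.toFinite {z | r v z}).toFinset, dd ^ n := by
          refine Finset.sum_le_sum fun z _ => ?_
          exact le_trans (Set.ncard_image_le (hfin z)) (ih z)
      _ ≤ dd * dd ^ n := by
          rw [Finset.sum_const, smul_eq_mul]
          refine Nat.mul_le_mul_right _ ?_
          rw [← Set.ncard_eq_toFinset_card]
          exact hcard v
      _ = dd ^ (n + 1) := by ring

lemma chain_count_left {V : Type*} [Finite V] (r : V → V → Prop) (dd : ℕ)
    (hcard : ∀ v : V, {z | r z v}.ncard ≤ dd) (n : ℕ) (v : V) :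
    {l : List V | l.length = n ∧ (l ++ [v]).Chain' r}.ncard ≤ dd ^ n := by
  have himg : {l : List V | l.length = n ∧ (l ++ [v]).Chain' r} =
      List.reverse '' {l : List V | l.length = n ∧ (v :: l).Chain' (flip r)} := by
    ext l
    constructor
    · rintro ⟨h1, h2⟩
      refine ⟨l.reverse, ⟨by simp [h1], ?_⟩, by simp⟩
      have h3 : List.Chain' r ((v :: l.reverse).reverse) := by simpa using h2
      exact List.isChain_reverse.mp h3
    · rintro ⟨m, ⟨h1, h2⟩, rfl⟩
      refine ⟨by simp [h1], ?_⟩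
      have h3 := List.isChain_reverse.mpr h2
      simpa [List.Chain', flip] using h3
  rw [himg, Set.ncard_image_of_injective _ List.reverse_injective]
  exact chain_count_right (flip r) dd hcard n v

end Kautz

namespace Kautz

variable {d D : ℕ}

lemma word_ne_nil (hD : 1 ≤ D) (v : Vertex d D) : v.word ≠ [] := by
  intro h
  have := v.length_eq
  rw [h] at this
  simp at this
  omega

lemma adj_out (hD : 1 ≤ D) {v z : Vertex d D} (h : Adj v z) :
    ∃ c : Fin (d+1), (∀ x ∈ v.word.getLast?, x ≠ c) ∧ z.word = v.word.tail ++ [c] := by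
  obtain ⟨w, hlen, hchain, hv, hz⟩ := h
  have hw : w ≠ [] := by intro h; rw [h] at hlen; simp at hlen
  refine ⟨w.getLast hw, ?_, ?_⟩
  · have hw2 : w = v.word ++ [w.getLast hw] := by
      rw [hv]; exact (List.dropLast_append_getLast hw).symm
    rw [hw2] at hchain
    have hsplit := List.isChain_append.mp hchain
    intro x hx
    exact hsplit.2.2 x hx (w.getLast hw) (by simp)
  · rw [hz]
    conv_lhs => rw [← List.dropLast_append_getLast hw, ← hv]
    obtain ⟨a, t, ht⟩ : ∃ a t, v.word = a :: t := by
      cases hv' : v.word with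
      | nil => exact absurd hv' (word_ne_nil hD v)
      | cons a t => exact ⟨a, t, rfl⟩
    rw [ht]
    simp

lemma adj_in (hD : 1 ≤ D) {z u : Vertex d D} (h : Adj z u) :
    ∃ c : Fin (d+1), (∀ x ∈ u.word.head?, c ≠ x) ∧ z.word = c :: u.word.dropLast := by
  obtain ⟨w, hlen, hchain, hzw, huw⟩ := h
  obtain ⟨c, w', rfl⟩ : ∃ c w', w = c :: w' := by
    cases w with
    | nil => simp at hlen
    | cons c w' => exact ⟨c, w', rfl⟩
  have hw' : w' = u.word := by simpa using huw.symm
  subst hw'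
  refine ⟨c, ?_, ?_⟩
  · exact (List.isChain_cons.mp hchain).1
  · rw [hzw]
    obtain ⟨a, t, ht⟩ : ∃ a t, u.word = a :: t := by
      cases hu' : u.word with
      | nil => exact absurd hu' (word_ne_nil hD u)
      | cons a t => exact ⟨a, t, rfl⟩
    rw [ht]
    simp

lemma ncard_ne_letter (b : Fin (d+1)) : {c : Fin (d+1) | c ≠ b}.ncard = d := by
  have hs : {c : Fin (d+1) | c ≠ b} = Set.univ \ {b} := by ext c; simp
  rw [hs, Set.ncard_diff (by simp), Set.ncard_univ, Set.ncard_singleton,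
    Nat.card_eq_fintype_card, Fintype.card_fin]
  omega

lemma outdeg (hD : 1 ≤ D) (v : Vertex d D) : {z : Vertex d D | Adj v z}.ncard ≤ d := by
  classical
  have hvne := word_ne_nil hD v
  have hlast : v.word.getLast? = some (v.word.getLast hvne) := List.getLast?_eq_getLast _
  have hle : {z : Vertex d D | Adj v z}.ncard ≤
      ({c : Fin (d+1) | c ≠ v.word.getLast hvne}).ncard := by
    apply Set.ncard_le_ncard_of_injOn (fun z => (z.word.getLast?).getD 0)
    · intro z hz
      obtain ⟨c, hc, hzw⟩ := adj_out hD hz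
      have hzl : z.word.getLast? = some c := by rw [hzw]; exact List.getLast?_concat
      show (z.word.getLast?).getD 0 ∈ _
      rw [hzl]
      simp only [Option.getD_some, Set.mem_setOf_eq]
      exact fun hEq => (hc _ hlast) (hEq ▸ rfl)
    · intro z1 h1 z2 h2 hf
      obtain ⟨c1, _, hw1⟩ := adj_out hD h1
      obtain ⟨c2, _, hw2⟩ := adj_out hD h2
      have e1 : z1.word.getLast? = some c1 := by rw [hw1]; exact List.getLast?_concat
      have e2 : z2.word.getLast? = some c2 := by rw [hw2]; exact List.getLast?_concat
      have hcc : c1 = c2 := by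
        have : (z1.word.getLast?).getD 0 = (z2.word.getLast?).getD 0 := hf
        rw [e1, e2] at this; simpa using this
      exact Vertex.ext' (by rw [hw1, hw2, hcc])
  rw [ncard_ne_letter] at hle
  exact hle

lemma indeg (hD : 1 ≤ D) (u : Vertex d D) : {z : Vertex d D | Adj z u}.ncard ≤ d := by
  classical
  have hune := word_ne_nil hD u
  have hhead : u.word.head? = some (u.word.head hune) := List.head?_eq_head _
  have hle : {z : Vertex d D | Adj z u}.ncard ≤
      ({c : Fin (d+1) | c ≠ u.word.head hune}).ncard := by
    apply Set.ncard_le_ncard_of_injOn (fun z => (z.word.head?).getD 0)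
    · intro z hz
      obtain ⟨c, hc, hzw⟩ := adj_in hD hz
      have hzl : z.word.head? = some c := by rw [hzw]; rfl
      show (z.word.head?).getD 0 ∈ _
      rw [hzl]
      simp only [Option.getD_some, Set.mem_setOf_eq]
      exact hc _ hhead
    · intro z1 h1 z2 h2 hf
      obtain ⟨c1, _, hw1⟩ := adj_in hD h1
      obtain ⟨c2, _, hw2⟩ := adj_in hD h2
      have e1 : z1.word.head? = some c1 := by rw [hw1]; rfl
      have e2 : z2.word.head? = some c2 := by rw [hw2]; rfl
      have hcc : c1 = c2 := by
        have : (z1.word.head?).getD 0 = (z2.word.head?).getD 0 := hf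
        rw [e1, e2] at this; simpa using this
      exact Vertex.ext' (by rw [hw1, hw2, hcc])
  rw [ncard_ne_letter] at hle
  exact hle

end Kautz

namespace Kautz

variable {d D : ℕ}

lemma claimC (e : Edge d D) {k t t' : ℕ} (hk1 : 1 ≤ k) (hkD : k ≤ D)
    (ht'1 : 1 ≤ t') (ht'k : t' ≤ k) (ht't : t' ≤ t) (htw : t ≤ t' + (D - k)) (htD : t ≤ D) :
    N e D t ≤ d ^ (D - k) * N e k t' := by
  classical
  have hD1 : 1 ≤ D := le_trans hk1 hkD
  have ht1 : 1 ≤ t := le_trans ht'1 ht't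
  set i := t - t' with hi
  have hik : i + k ≤ D := by omega
  set S : Set (Vertex d D × Vertex d D) :=
    {xy | dist xy.1 xy.2 = D ∧ ∃ p, IsWalk p xy.1 xy.2 ∧ p.length = D + 1 ∧
      p[t-1]? = some e.src ∧ p[t]? = some e.tgt} with hS
  set T : Set (Vertex d D × Vertex d D) :=
    {xy | dist xy.1 xy.2 = k ∧ ∃ p, IsWalk p xy.1 xy.2 ∧ p.length = k + 1 ∧
      p[t'-1]? = some e.src ∧ p[t']? = some e.tgt} with hT
  set G : Vertex d D × Vertex d D → Set (Vertex d D × Vertex d D) := fun z =>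
    {xy | ∃ p, IsWalk p xy.1 xy.2 ∧ p.length = D + 1 ∧
      p[t-1]? = some e.src ∧ p[t]? = some e.tgt ∧ p[i]? = some z.1 ∧ p[i+k]? = some z.2} with hG
  have hNS : N e D t = S.ncard := rfl
  have hNT : N e k t' = T.ncard := rfl
  -- Step 1 : covering
  have hcover : S ⊆ ⋃ z ∈ T, G z := by
    rintro ⟨x, y⟩ ⟨hdist, p, hw, hlen, hsrc, htgt⟩
    have hiu : i < p.length := by rw [hlen]; omega
    have hivlt : i + k < p.length := by rw [hlen]; omega
    set u := p[i]'hiu with hu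
    set v := p[i+k]'hivlt with hv
    have hu? : p[i]? = some u := List.getElem?_eq_getElem hiu
    have hv? : p[i+k]? = some v := List.getElem?_eq_getElem hivlt
    obtain ⟨hqw, hqlen⟩ := segment_walk hw.2.2 (Nat.le_add_right i k)
      (by rw [hlen]; omega) hu? hv?
    rw [show i + k - i = k by omega] at hqw hqlen
    have hx0 : p[0]? = some x := by rw [← List.head?_eq_getElem?]; exact hw.1
    have hyD : p[D]? = some y := by
      have hgl := hw.2.1
      rw [List.getLast?_eq_getElem?, hlen] at hgl
      simpa using hgl
    -- dist u v = k
    have hdist_le : dist u v ≤ k := dist_le_of_walk hqw hqlen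
    have hlb : ∀ m ∈ {m | ∃ r, IsWalk r u v ∧ r.length = m + 1}, k ≤ m := by
      rintro m ⟨r, hr, hrlen⟩
      obtain ⟨h1w, h1len⟩ := segment_walk hw.2.2 (Nat.zero_le i) (by rw [hlen]; omega) hx0 hu?
      obtain ⟨h3w, h3len⟩ := segment_walk hw.2.2 (show i + k ≤ D by omega)
        (by omega) hv? hyD
      obtain ⟨hAw, hAlen⟩ := h1w.append hr
      obtain ⟨hBw, hBlen⟩ := hAw.append h3w
      have hBlen' : (((p.drop 0).take (i - 0 + 1) ++ r.tail) ++
          ((p.drop (i+k)).take (D - (i+k) + 1)).tail).length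
          = (i + m + (D - (i + k))) + 1 := by omega
      have hDle := dist_le_of_walk hBw hBlen'
      have hDD : D ≤ i + m + (D - (i + k)) := le_trans hdist.ge hDle
      omega
    have hdistuv : dist u v = k := by
      have hne : {m | ∃ r, IsWalk r u v ∧ r.length = m + 1}.Nonempty := ⟨k, _, hqw, hqlen⟩
      exact le_antisymm hdist_le (hlb _ (Nat.sInf_mem hne))
    have hq1 : ((p.drop i).take (k+1))[t'-1]? = some e.src := by
      rw [List.getElem?_take, if_pos (by omega), List.getElem?_drop,
        show i + (t'-1) = t-1 by omega]
      exact hsrc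
    have hq2 : ((p.drop i).take (k+1))[t']? = some e.tgt := by
      rw [List.getElem?_take, if_pos (by omega), List.getElem?_drop,
        show i + t' = t by omega]
      exact htgt
    have hzT : (u, v) ∈ T := ⟨hdistuv, _, hqw, hqlen, hq1, hq2⟩
    exact Set.mem_biUnion hzT ⟨p, hw, hlen, hsrc, htgt, hu?, hv?⟩
  -- Step 2 : fiber bound
  have hfiber : ∀ z : Vertex d D × Vertex d D, (G z).ncard ≤ d ^ (D - k) := by
    rintro ⟨u, v⟩
    set L : Set (List (Vertex d D)) := {l | l.length = i ∧ (l ++ [u]).Chain' Adj} with hL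
    set R : Set (List (Vertex d D)) := {l | l.length = D - k - i ∧ (v :: l).Chain' Adj} with hR
    have key1 : ∀ (p : List (Vertex d D)), p.length = D + 1 → p[i]? = some u →
        p[0]? = (p.take i ++ [u])[0]? := by
      intro p hlen hpu
      rw [List.getElem?_append]
      by_cases hi0 : 0 < (p.take i).length
      · rw [if_pos hi0, List.getElem?_take, if_pos (by rw [List.length_take] at hi0; omega)]
      · rw [if_neg hi0]
        have hi00 : i = 0 := by rw [List.length_take] at hi0; omega
        have h0 : (0 : ℕ) - (p.take i).length = 0 := by omega
        rw [h0]
        simp only [List.getElem?_cons_zero]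
        rw [hi00] at hpu
        exact hpu
    have key2 : ∀ (p : List (Vertex d D)), p.length = D + 1 → p[i+k]? = some v →
        p[D]? = (v :: p.drop (i+k+1))[D - (i+k)]? := by
      intro p hlen hpv
      have hbound : i + k < p.length := by rw [hlen]; omega
      have hdropeq : v :: p.drop (i+k+1) = p.drop (i+k) := by
        rw [List.drop_eq_getElem_cons hbound]
        have : p[i+k]? = some (p[i+k]'hbound) := List.getElem?_eq_getElem hbound
        rw [this] at hpv
        rw [Option.some.inj hpv]
      rw [hdropeq, List.getElem?_drop, show i + k + (D - (i+k)) = D by omega]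
    have hLfin : L.Finite := (List.finite_length_eq _ i).subset fun l hl => hl.1
    have hRfin : R.Finite := (List.finite_length_eq _ _).subset fun l hl => hl.1
    have hcard : (G (u,v)).ncard ≤ (L ×ˢ R).ncard := by
      apply Set.ncard_le_ncard_of_injOn
        (fun xy => if h : ∃ p, IsWalk p xy.1 xy.2 ∧ p.length = D + 1 ∧
            p[t-1]? = some e.src ∧ p[t]? = some e.tgt ∧ p[i]? = some u ∧ p[i+k]? = some v
          then (h.choose.take i, h.choose.drop (i+k+1)) else ([], []))
        (ht := hLfin.prod hRfin)
      · rintro ⟨x, y⟩ hxy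
        have hex : ∃ p, IsWalk p x y ∧ p.length = D + 1 ∧
            p[t-1]? = some e.src ∧ p[t]? = some e.tgt ∧ p[i]? = some u ∧ p[i+k]? = some v := hxy
        show (if h : _ then _ else _) ∈ L ×ˢ R
        rw [dif_pos hex]
        obtain ⟨hw, hlen, hsrc, htgt, hu?, hv?⟩ := hex.choose_spec
        constructor
        · constructor
          · rw [List.length_take, hlen]
            omega
          · have htake : hex.choose.take i ++ [u] = hex.choose.take (i+1) := by
              rw [List.take_succ, hu?]
              rfl
            rw [htake]
            exact hw.2.2.take _
        · constructor
          · rw [List.length_drop, hlen]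
            omega
          · have hbound : i + k < hex.choose.length := by rw [hlen]; omega
            have hdropeq : v :: hex.choose.drop (i+k+1) = hex.choose.drop (i+k) := by
              rw [List.drop_eq_getElem_cons hbound]
              have hg : hex.choose[i+k]? = some (hex.choose[i+k]'hbound) :=
                List.getElem?_eq_getElem hbound
              rw [hg] at hv?
              rw [Option.some.inj hv?]
            rw [hdropeq]
            exact hw.2.2.drop _
      · rintro ⟨x1, y1⟩ h1 ⟨x2, y2⟩ h2 hf
        have hex1 : ∃ p, IsWalk p x1 y1 ∧ p.length = D + 1 ∧
            p[t-1]? = some e.src ∧ p[t]? = some e.tgt ∧ p[i]? = some u ∧ p[i+k]? = some v := h1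
        have hex2 : ∃ p, IsWalk p x2 y2 ∧ p.length = D + 1 ∧
            p[t-1]? = some e.src ∧ p[t]? = some e.tgt ∧ p[i]? = some u ∧ p[i+k]? = some v := h2
        beta_reduce at hf
        rw [dif_pos hex1, dif_pos hex2] at hf
        have hf1 : hex1.choose.take i = hex2.choose.take i := congrArg Prod.fst hf
        have hf2 : hex1.choose.drop (i+k+1) = hex2.choose.drop (i+k+1) := congrArg Prod.snd hf
        obtain ⟨hw1, hlen1, _, _, hu1, hv1⟩ := hex1.choose_spec
        obtain ⟨hw2, hlen2, _, _, hu2, hv2⟩ := hex2.choose_spec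
        have hx : x1 = x2 := by
          have e1 : hex1.choose[0]? = some x1 := by
            rw [← List.head?_eq_getElem?]; exact hw1.1
          have e2 : hex2.choose[0]? = some x2 := by
            rw [← List.head?_eq_getElem?]; exact hw2.1
          have k1 := key1 _ hlen1 hu1
          have k2 := key1 _ hlen2 hu2
          rw [hf1] at k1
          rw [e1] at k1
          rw [e2] at k2
          exact Option.some.inj (k1.trans k2.symm)
        have hy : y1 = y2 := by
          have e1 : hex1.choose[D]? = some y1 := by
            have hgl := hw1.2.1
            rw [List.getLast?_eq_getElem?, hlen1] at hgl
            simpa using hgl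
          have e2 : hex2.choose[D]? = some y2 := by
            have hgl := hw2.2.1
            rw [List.getLast?_eq_getElem?, hlen2] at hgl
            simpa using hgl
          have k1 := key2 _ hlen1 hv1
          have k2 := key2 _ hlen2 hv2
          rw [hf2] at k1
          rw [e1] at k1
          rw [e2] at k2
          exact Option.some.inj (k1.trans k2.symm)
        rw [Prod.mk.injEq]
        exact ⟨hx, hy⟩
    have hprod : (L ×ˢ R).ncard = L.ncard * R.ncard := by
      rw [← Nat.card_coe_set_eq, ← Nat.card_coe_set_eq, ← Nat.card_coe_set_eq,
        Nat.card_congr (Equiv.Set.prod L R), Nat.card_prod]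
    have hLle : L.ncard ≤ d ^ i := chain_count_left Adj d (fun w => indeg hD1 w) i u
    have hRle : R.ncard ≤ d ^ (D - k - i) := chain_count_right Adj d (fun w => outdeg hD1 w) _ v
    calc (G (u,v)).ncard ≤ (L ×ˢ R).ncard := hcard
      _ = L.ncard * R.ncard := hprod
      _ ≤ d ^ i * d ^ (D - k - i) := Nat.mul_le_mul hLle hRle
      _ = d ^ (D - k) := by rw [← pow_add]; congr 1; omega
  -- Step 3 : assemble
  rw [hNS, hNT]
  have hTfin : T.Finite := Set.toFinite _
  calc S.ncard ≤ (⋃ z ∈ T, G z).ncard := Set.ncard_le_ncard hcover (Set.toFinite _)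
    _ ≤ ∑ z ∈ hTfin.toFinset, (G z).ncard := ncard_biUnion_le hTfin G (fun z => Set.toFinite _)
    _ ≤ ∑ _z ∈ hTfin.toFinset, d ^ (D - k) := Finset.sum_le_sum fun z _ => hfiber z
    _ = hTfin.toFinset.card * d ^ (D - k) := by rw [Finset.sum_const, smul_eq_mul]
    _ = d ^ (D - k) * T.ncard := by
        rw [← Set.ncard_eq_toFinset_card _ hTfin, mul_comm]

end Kautz

namespace Kautz

lemma tele_real (A B x y : ℝ) (hAB : A ≤ B) (hxy : x ≤ y) :
    min B (max A y) - min B (max A x) = max 0 (min B y - max A x) := by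
  rcases le_total y A with h1 | h1 <;> rcases le_total x A with h2 | h2 <;>
    rcases le_total y B with h3 | h3 <;> rcases le_total x B with h4 | h4 <;>
      simp only [min_def, max_def] <;> split_ifs <;> linarith

lemma tele_real' (A B x y : ℝ) (hAB : A ≤ B) (hxy : x ≤ y) :
    min B (max A y) - min B (max A x) = max 0 (min y B - max x A) := by
  rw [min_comm y B, max_comm x A]
  exact tele_real A B x y hAB hxy

end Kautz

set_option maxHeartbeats 2000000 in
/-- For `d ≥ 2`, any directed edge `e` of `K(d,D)` and any `1 ≤ k ≤ D`,
`U_k(e) ≥ (k/D)·d^{−(D−k)}·U_D(e)`. -/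
theorem statement8 (d D : ℕ) (hd : 2 ≤ d) (e : Kautz.Edge d D)
    (k : ℕ) (hk1 : 1 ≤ k) (hkD : k ≤ D) :
    ((k : ℝ) / (D : ℝ)) * (d : ℝ) ^ ((k : ℤ) - (D : ℤ)) * (Kautz.U e D : ℝ)
      ≤ (Kautz.U e k : ℝ) := by
  classical
  have hD1 : 1 ≤ D := le_trans hk1 hkD
  have hD0 : (0:ℝ) ≤ (D:ℝ) := Nat.cast_nonneg D
  have hDpos : (0:ℝ) < (D:ℝ) := by exact_mod_cast hD1
  have hkpos : (0:ℝ) < (k:ℝ) := by exact_mod_cast hk1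
  have hkDR : (k:ℝ) ≤ (D:ℝ) := by exact_mod_cast hkD
  have hdpos : (0:ℝ) < (d:ℝ) := by positivity
  set c : ℝ := (d:ℝ) ^ ((k:ℤ) - (D:ℤ)) with hc
  have hcpos : 0 < c := by rw [hc]; exact zpow_pos hdpos _
  have hzpow : c * (d:ℝ) ^ (D - k) = 1 := by
    rw [hc, ← zpow_natCast (d:ℝ) (D-k), ← zpow_add₀ (ne_of_gt hdpos)]
    have hDk : ((D - k : ℕ) : ℤ) = (D:ℤ) - (k:ℤ) := by omega
    rw [hDk]
    norm_num
  set Λ : ℕ → ℕ → ℝ := fun a b =>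
    max 0 (min ((a:ℝ)*(D:ℝ)) ((b:ℝ)*(k:ℝ)) -
      max (((a:ℝ)-1)*(D:ℝ)) (((b:ℝ)-1)*(k:ℝ))) with hΛ
  have hΛnonneg : ∀ a b, 0 ≤ Λ a b := fun _ _ => le_max_left _ _
  -- row sums
  have hrow : ∀ t' : ℕ, 1 ≤ t' → t' ≤ k → ∑ t ∈ Finset.Icc 1 D, Λ t' t = (D:ℝ) := by
    intro t' h1 h2
    have ht'R : (t':ℝ) ≤ (k:ℝ) := by exact_mod_cast h2
    have ht'1R : (1:ℝ) ≤ (t':ℝ) := by exact_mod_cast h1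
    set g : ℕ → ℝ := fun s =>
      min ((t':ℝ)*(D:ℝ)) (max (((t':ℝ)-1)*(D:ℝ)) ((s:ℝ)*(k:ℝ))) with hg
    have hAB : ((t':ℝ)-1)*(D:ℝ) ≤ (t':ℝ)*(D:ℝ) := by nlinarith
    have hstep : ∀ j ∈ Finset.range D, Λ t' (1+j) = g (j+1) - g j := by
      intro j _
      have hxy : (j:ℝ)*(k:ℝ) ≤ ((j:ℝ)+1)*(k:ℝ) := by
        nlinarith [Nat.cast_nonneg (α := ℝ) j]
      have e2 : g (j+1) - g j =
          max 0 (min ((t':ℝ)*(D:ℝ)) (((j:ℝ)+1)*(k:ℝ)) -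
            max (((t':ℝ)-1)*(D:ℝ)) ((j:ℝ)*(k:ℝ))) := by
        simp only [hg]
        push_cast
        have h := Kautz.tele_real (((t':ℝ)-1)*(D:ℝ)) ((t':ℝ)*(D:ℝ))
          ((j:ℝ)*(k:ℝ)) (((j:ℝ)+1)*(k:ℝ)) hAB hxy
        linarith [h]
      have e3 : Λ t' (1+j) =
          max 0 (min ((t':ℝ)*(D:ℝ)) (((j:ℝ)+1)*(k:ℝ)) -
            max (((t':ℝ)-1)*(D:ℝ)) ((j:ℝ)*(k:ℝ))) := by
        simp only [hΛ]
        push_cast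
        ring_nf
      rw [e3, e2]
    have hIcc : Finset.Icc 1 D = Finset.Ico 1 (D+1) := by rw [Finset.Ico_add_one_right_eq_Icc]
    rw [hIcc, Finset.sum_Ico_eq_sum_range]
    have hD' : D + 1 - 1 = D := by omega
    rw [hD', Finset.sum_congr rfl hstep, Finset.sum_range_sub g D]
    have hgD : g D = (t':ℝ)*(D:ℝ) := by
      have hb1 : ((t':ℝ)-1)*(D:ℝ) ≤ (D:ℝ)*(k:ℝ) := by nlinarith
      have hb2 : (t':ℝ)*(D:ℝ) ≤ (D:ℝ)*(k:ℝ) := by nlinarith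
      simp only [hg]
      rw [max_eq_right hb1, min_eq_left hb2]
    have hg0 : g 0 = ((t':ℝ)-1)*(D:ℝ) := by
      have hb1 : (0:ℝ) ≤ ((t':ℝ)-1)*(D:ℝ) := by nlinarith
      simp only [hg]
      rw [Nat.cast_zero, zero_mul, max_eq_left hb1, min_eq_right hAB]
    rw [hgD, hg0]
    ring
  -- column sums
  have hcol : ∀ t : ℕ, 1 ≤ t → t ≤ D → ∑ t' ∈ Finset.Icc 1 k, Λ t' t = (k:ℝ) := by
    intro t h1 h2
    have htR : (t:ℝ) ≤ (D:ℝ) := by exact_mod_cast h2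
    have ht1R : (1:ℝ) ≤ (t:ℝ) := by exact_mod_cast h1
    set g : ℕ → ℝ := fun s =>
      min ((t:ℝ)*(k:ℝ)) (max (((t:ℝ)-1)*(k:ℝ)) ((s:ℝ)*(D:ℝ))) with hg
    have hAB : ((t:ℝ)-1)*(k:ℝ) ≤ (t:ℝ)*(k:ℝ) := by nlinarith
    have hstep : ∀ j ∈ Finset.range k, Λ (1+j) t = g (j+1) - g j := by
      intro j _
      have hxy : (j:ℝ)*(D:ℝ) ≤ ((j:ℝ)+1)*(D:ℝ) := by
        nlinarith [Nat.cast_nonneg (α := ℝ) j]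
      have e2 : g (j+1) - g j =
          max 0 (min (((j:ℝ)+1)*(D:ℝ)) ((t:ℝ)*(k:ℝ)) -
            max ((j:ℝ)*(D:ℝ)) (((t:ℝ)-1)*(k:ℝ))) := by
        simp only [hg]
        push_cast
        have h := Kautz.tele_real' (((t:ℝ)-1)*(k:ℝ)) ((t:ℝ)*(k:ℝ))
          ((j:ℝ)*(D:ℝ)) (((j:ℝ)+1)*(D:ℝ)) hAB hxy
        linarith [h]
      have e3 : Λ (1+j) t =
          max 0 (min (((j:ℝ)+1)*(D:ℝ)) ((t:ℝ)*(k:ℝ)) -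
            max ((j:ℝ)*(D:ℝ)) (((t:ℝ)-1)*(k:ℝ))) := by
        simp only [hΛ]
        push_cast
        ring_nf
      rw [e3, e2]
    have hIcc : Finset.Icc 1 k = Finset.Ico 1 (k+1) := by rw [Finset.Ico_add_one_right_eq_Icc]
    rw [hIcc, Finset.sum_Ico_eq_sum_range]
    have hk' : k + 1 - 1 = k := by omega
    rw [hk', Finset.sum_congr rfl hstep, Finset.sum_range_sub g k]
    have hgk : g k = (t:ℝ)*(k:ℝ) := by
      have hb1 : ((t:ℝ)-1)*(k:ℝ) ≤ (k:ℝ)*(D:ℝ) := by nlinarith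
      have hb2 : (t:ℝ)*(k:ℝ) ≤ (k:ℝ)*(D:ℝ) := by nlinarith
      simp only [hg]
      rw [max_eq_right hb1, min_eq_left hb2]
    have hg0 : g 0 = ((t:ℝ)-1)*(k:ℝ) := by
      have hb1 : (0:ℝ) ≤ ((t:ℝ)-1)*(k:ℝ) := by nlinarith
      simp only [hg]
      rw [Nat.cast_zero, zero_mul, max_eq_left hb1, min_eq_right hAB]
    rw [hgk, hg0]
    ring
  -- support
  have hsupp : ∀ t' t : ℕ, 1 ≤ t' → t' ≤ k → 1 ≤ t → t ≤ D → Λ t' t ≠ 0 →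
      t' ≤ t ∧ t ≤ t' + (D - k) := by
    intro t' t h1 h2 h3 h4 hne
    have htR : (t:ℝ) ≤ (D:ℝ) := by exact_mod_cast h4
    have ht'R : (t':ℝ) ≤ (k:ℝ) := by exact_mod_cast h2
    have hpos : 0 < min ((t':ℝ)*(D:ℝ)) ((t:ℝ)*(k:ℝ)) -
        max (((t':ℝ)-1)*(D:ℝ)) (((t:ℝ)-1)*(k:ℝ)) := by
      by_contra hle
      push_neg at hle
      exact hne (by simp only [hΛ]; exact max_eq_left hle)
    have hi1 : ((t':ℝ)-1)*(D:ℝ) < (t:ℝ)*(k:ℝ) :=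
      lt_of_le_of_lt (le_max_left _ _)
        (lt_of_lt_of_le (by linarith) (min_le_right _ _))
    have hi2 : ((t:ℝ)-1)*(k:ℝ) < (t':ℝ)*(D:ℝ) :=
      lt_of_le_of_lt (le_max_right _ _)
        (lt_of_lt_of_le (by linarith) (min_le_left _ _))
    constructor
    · by_contra hcon
      push_neg at hcon
      have hcast : (t:ℝ) ≤ (t':ℝ) - 1 := by
        have hx : (t:ℝ) + 1 ≤ (t':ℝ) := by exact_mod_cast hcon
        linarith
      have hb1 : (t:ℝ)*(D:ℝ) ≤ ((t':ℝ)-1)*(D:ℝ) := mul_le_mul_of_nonneg_right hcast hD0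
      have hb2 : (t:ℝ)*(k:ℝ) ≤ (t:ℝ)*(D:ℝ) :=
        mul_le_mul_of_nonneg_left hkDR (by positivity)
      linarith
    · by_contra hcon
      push_neg at hcon
      have hcast : (t':ℝ) + ((D:ℝ) - (k:ℝ)) ≤ (t:ℝ) - 1 := by
        have hx : ((t' + (D-k) : ℕ):ℝ) + 1 ≤ (t:ℝ) := by exact_mod_cast hcon
        have hy : ((t' + (D-k) : ℕ):ℝ) = (t':ℝ) + ((D:ℝ) - (k:ℝ)) := by
          push_cast [Nat.cast_sub hkD]
          ring
        linarith [hx, hy.symm.le, hy.le]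
      have hb1 : ((t':ℝ) + ((D:ℝ)-(k:ℝ)))*(k:ℝ) ≤ ((t:ℝ)-1)*(k:ℝ) :=
        mul_le_mul_of_nonneg_right hcast (le_of_lt hkpos)
      have hb2 : ((D:ℝ)-(k:ℝ))*(t':ℝ) ≤ ((D:ℝ)-(k:ℝ))*(k:ℝ) :=
        mul_le_mul_of_nonneg_left ht'R (by linarith)
      have hid1 : ((t':ℝ) + ((D:ℝ)-(k:ℝ)))*(k:ℝ)
          = (t':ℝ)*(k:ℝ) + ((D:ℝ)-(k:ℝ))*(k:ℝ) := by ring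
      have hid2 : (t':ℝ)*(D:ℝ) = (t':ℝ)*(k:ℝ) + ((D:ℝ)-(k:ℝ))*(t':ℝ) := by ring
      linarith
  -- casts of U
  have hUDcast : (Kautz.U e D : ℝ) = ∑ t ∈ Finset.Icc 1 D, (Kautz.N e D t : ℝ) := by
    simp [Kautz.U]
  have hUkcast : (Kautz.U e k : ℝ) = ∑ t ∈ Finset.Icc 1 k, (Kautz.N e k t : ℝ) := by
    simp [Kautz.U]
  -- per-t' estimate
  have hmain : ∀ t' ∈ Finset.Icc 1 k,
      (1/(D:ℝ)) * ∑ t ∈ Finset.Icc 1 D, Λ t' t * (c * (Kautz.N e D t : ℝ))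
        ≤ (Kautz.N e k t' : ℝ) := by
    intro t' ht'
    obtain ⟨h1, h2⟩ := Finset.mem_Icc.mp ht'
    have hbound : ∀ t ∈ Finset.Icc 1 D,
        Λ t' t * (c * (Kautz.N e D t : ℝ)) ≤ Λ t' t * (Kautz.N e k t' : ℝ) := by
      intro t ht
      obtain ⟨ha, hb⟩ := Finset.mem_Icc.mp ht
      rcases eq_or_ne (Λ t' t) 0 with h0 | h0
      · rw [h0]; simp
      · obtain ⟨hs1, hs2⟩ := hsupp t' t h1 h2 ha hb h0
        have hC := Kautz.claimC e hk1 hkD h1 h2 hs1 hs2 hb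
        have hCr : c * (Kautz.N e D t : ℝ) ≤ (Kautz.N e k t' : ℝ) := by
          have hCR : (Kautz.N e D t : ℝ) ≤ (d:ℝ)^(D-k) * (Kautz.N e k t' : ℝ) := by
            exact_mod_cast hC
          calc c * (Kautz.N e D t : ℝ)
              ≤ c * ((d:ℝ)^(D-k) * (Kautz.N e k t' : ℝ)) :=
                mul_le_mul_of_nonneg_left hCR (le_of_lt hcpos)
            _ = (c * (d:ℝ)^(D-k)) * (Kautz.N e k t' : ℝ) := by ring
            _ = (Kautz.N e k t' : ℝ) := by rw [hzpow, one_mul]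
        exact mul_le_mul_of_nonneg_left hCr (hΛnonneg t' t)
    calc (1/(D:ℝ)) * ∑ t ∈ Finset.Icc 1 D, Λ t' t * (c * (Kautz.N e D t : ℝ))
        ≤ (1/(D:ℝ)) * ∑ t ∈ Finset.Icc 1 D, Λ t' t * (Kautz.N e k t' : ℝ) :=
          mul_le_mul_of_nonneg_left (Finset.sum_le_sum hbound) (by positivity)
      _ = (1/(D:ℝ)) * ((∑ t ∈ Finset.Icc 1 D, Λ t' t) * (Kautz.N e k t' : ℝ)) := by
          rw [Finset.sum_mul]
      _ = (Kautz.N e k t' : ℝ) := by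
          rw [hrow t' h1 h2]
          field_simp
  -- swap sums
  have hswap : ∑ t' ∈ Finset.Icc 1 k,
      ((1/(D:ℝ)) * ∑ t ∈ Finset.Icc 1 D, Λ t' t * (c * (Kautz.N e D t : ℝ)))
      = ((k:ℝ)/(D:ℝ)) * c * ∑ t ∈ Finset.Icc 1 D, (Kautz.N e D t : ℝ) := by
    rw [← Finset.mul_sum, Finset.sum_comm]
    have hinner : ∀ t ∈ Finset.Icc 1 D,
        ∑ t' ∈ Finset.Icc 1 k, Λ t' t * (c * (Kautz.N e D t : ℝ))
          = (k:ℝ) * (c * (Kautz.N e D t : ℝ)) := by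
      intro t ht
      obtain ⟨ha, hb⟩ := Finset.mem_Icc.mp ht
      rw [← Finset.sum_mul, hcol t ha hb]
    rw [Finset.sum_congr rfl hinner, ← Finset.mul_sum, ← Finset.mul_sum]
    ring
  rw [hUDcast, hUkcast, ← hswap]
  exact Finset.sum_le_sum hmain
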